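/- arXiv:2503.22918 — 2 statements merged into one kernel-verified Lean document; each statement's English description precedes it below -/
import Mathlib

section
/- Let f : (0, r0) → ℝ be nonnegative and differentiable a.e., let ε ∈ (0,1), θ ≥ 0, C > 0, and suppose C_r := 1 + 2Cr² satisfies C_r ≤ 2 and f(r) ≤ C_r (1-ε) (r/2) f'(r) + C r⁴ θ for a.e. r ∈ (0, r0), with f absolutely continuous. Then there are constants C̄ > 0 and η = 2ε/(1-ε) > 0 such that for all 0 < t < s < r0: (C_s/s²)^{1/(1-ε)} f(s) - (C_t/t²)^{1/(1-ε)} f(t) ≥ -C̄ (s^{(2-4ε)/(1-ε)} - t^{(2-4ε)/(1-ε)}), provided ε < 1/2. -/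
open MeasureTheory Set

/-- Monotonicity from a.e. nonnegative derivative (with everywhere differentiability). -/
lemma mono_aux (r0 : ℝ) (Φ G' : ℝ → ℝ) (t s : ℝ) (ht : 0 < t) (hts : t < s) (hs : s < r0)
    (hd : ∀ r ∈ Ioo (0:ℝ) r0, HasDerivAt Φ (G' r) r)
    (hae : ∀ᵐ r ∂(volume : Measure ℝ), r ∈ Ioo 0 r0 → 0 ≤ G' r) :
    Φ t ≤ Φ s := by
  have hsub : Icc t s ⊆ Ioo 0 r0 := fun x hx => ⟨ht.trans_le hx.1, lt_of_le_of_lt hx.2 hs⟩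
  have haez : (fun y => min (G' y) 0) =ᵐ[volume.restrict (Icc t s)] (fun _ => (0:ℝ)) := by
    filter_upwards [ae_restrict_mem measurableSet_Icc, ae_restrict_of_ae hae] with x hx h2
    exact min_eq_right (h2 (hsub hx))
  have haez' : (fun y => min (G' y) 0) =ᵐ[volume.restrict (Ioc t s)] (fun _ => (0:ℝ)) := by
    filter_upwards [ae_restrict_mem measurableSet_Ioc, ae_restrict_of_ae hae] with x hx h2
    exact min_eq_right (h2 (hsub (Ioc_subset_Icc_self hx)))
  have h0 : (∫ y in t..s, min (G' y) 0) ≤ Φ s - Φ t := by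
    apply intervalIntegral.integral_le_sub_of_hasDeriv_right_of_le hts.le
      (fun x hx => (hd x (hsub hx)).continuousAt.continuousWithinAt)
      (fun x hx => (hd x (hsub (Ioo_subset_Icc_self hx))).hasDerivWithinAt)
      ((integrable_zero _ _ _).congr haez.symm)
      (fun x _ => min_le_left _ _)
  have hz : (∫ y in t..s, min (G' y) 0) = 0 := by
    rw [intervalIntegral.integral_of_le hts.le]
    exact integral_eq_zero_of_ae haez'
  linarith

lemma deriv_aux (C p α Cb : ℝ) (f : ℝ → ℝ) (r : ℝ) (hr : 0 < r) (hC : 0 < C)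
    (hf : DifferentiableAt ℝ f r) :
    HasDerivAt (fun x => ((1 + 2 * C * x ^ 2) / x ^ 2) ^ p * f x + Cb * x ^ α)
      ((-2 / r ^ 3) * p * ((1 + 2 * C * r ^ 2) / r ^ 2) ^ (p - 1) * f r
        + ((1 + 2 * C * r ^ 2) / r ^ 2) ^ p * deriv f r + Cb * (α * r ^ (α - 1))) r := by
  have hr2 : (r : ℝ) ^ 2 ≠ 0 := pow_ne_zero _ hr.ne'
  have hu0 : 0 < (1 + 2 * C * r ^ 2) / r ^ 2 := by positivity
  have h1 : HasDerivAt (fun x : ℝ => 1 + 2 * C * x ^ 2) (2 * C * ((2:ℕ) * r ^ (2 - 1))) r :=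
    ((hasDerivAt_pow 2 r).const_mul (2 * C)).const_add 1
  have h2 : HasDerivAt (fun x : ℝ => x ^ 2) ((2:ℕ) * r ^ (2 - 1)) r := hasDerivAt_pow 2 r
  have hu : HasDerivAt (fun x : ℝ => (1 + 2 * C * x ^ 2) / x ^ 2) (-2 / r ^ 3) r := by
    have := h1.div h2 hr2
    refine this.congr_deriv ?_
    rw [div_eq_div_iff (by positivity) (by positivity)]
    simp only [Nat.reduceSub, Nat.cast_ofNat, pow_one]
    ring
  have hrp := hu.rpow_const (p := p) (Or.inl hu0.ne')
  have hmul := hrp.mul hf.hasDerivAt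
  have hpow : HasDerivAt (fun x : ℝ => Cb * x ^ α) (Cb * (α * r ^ (α - 1))) r :=
    (Real.hasDerivAt_rpow_const (Or.inl hr.ne')).const_mul Cb
  have := hmul.add hpow
  exact this

lemma pos_aux (C θ ε p r F f' : ℝ) (hC : 0 < C) (hθ : 0 ≤ θ) (hε : 0 < ε) (hε2 : ε < 1/2)
    (hp : p = 1 / (1 - ε)) (hr : 0 < r) (hF : 0 ≤ F) (hCr : 1 + 2 * C * r ^ 2 ≤ 2)
    (hin : F ≤ (1 + 2 * C * r ^ 2) * (1 - ε) * (r / 2) * f' + C * r ^ 4 * θ) :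
    0 ≤ (-2 / r ^ 3) * p * ((1 + 2 * C * r ^ 2) / r ^ 2) ^ (p - 1) * F
      + ((1 + 2 * C * r ^ 2) / r ^ 2) ^ p * f'
      + (2 * p * C * θ * 2 ^ (p - 1) + 1) * r ^ (1 - 2 * (p - 1)) := by
  have h1ε : (0:ℝ) < 1 - ε := by linarith
  have hp0 : 0 < p := by rw [hp]; positivity
  have hq : 0 ≤ p - 1 := by
    have : 1 ≤ p := by rw [hp, le_div_iff₀ h1ε]; linarith
    linarith
  have hp1ε : p * (1 - ε) = 1 := by rw [hp]; field_simp
  set u : ℝ := (1 + 2 * C * r ^ 2) / r ^ 2 with hudef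
  have hu0 : 0 < u := by rw [hudef]; positivity
  have hur2 : (1 + 2 * C * r ^ 2) = u * r ^ 2 := by
    rw [hudef]; field_simp
  have hr3 : (0:ℝ) < r ^ 3 := by positivity
  have hr3' : (r:ℝ) ^ 3 ≠ 0 := hr3.ne'
  rw [hur2] at hin
  have t1 := mul_le_mul_of_nonneg_left hin (by positivity : (0:ℝ) ≤ 2 * p)
  have t2 : 2 * p * (u * r ^ 2 * (1 - ε) * (r / 2) * f' + C * r ^ 4 * θ)
      = u * f' * r ^ 3 + 2 * p * C * r ^ 4 * θ := by
    linear_combination (u * f' * r ^ 3) * hp1ε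
  have F3 : 2 * p * F ≤ u * f' * r ^ 3 + 2 * p * C * r ^ 4 * θ := t1.trans_eq t2
  have F1 : u ^ p = u ^ (p - 1) * u := by
    rw [← Real.rpow_add_one hu0.ne' (p - 1)]
    norm_num
  have hA0 : 0 ≤ u ^ (p - 1) := Real.rpow_nonneg hu0.le _
  have hu2 : u ≤ 2 / r ^ 2 := by rw [hudef]; gcongr
  have s1 : u ^ (p - 1) ≤ (2 / r ^ 2) ^ (p - 1) := Real.rpow_le_rpow hu0.le hu2 hq
  have s2 : ((2:ℝ) / r ^ 2) ^ (p - 1) = 2 ^ (p - 1) / (r ^ 2) ^ (p - 1) :=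
    Real.div_rpow (by norm_num) (by positivity) _
  have s3 : ((r:ℝ) ^ 2) ^ (p - 1) = r ^ (2 * (p - 1)) := by
    rw [← Real.rpow_natCast r 2, ← Real.rpow_mul hr.le]
    norm_num
  have s4 : r * u ^ (p - 1) ≤ r * (2 ^ (p - 1) / r ^ (2 * (p - 1))) := by
    have := s1.trans_eq (s2.trans (by rw [s3]))
    exact mul_le_mul_of_nonneg_left this hr.le
  have s5 : r * ((2:ℝ) ^ (p - 1) / r ^ (2 * (p - 1))) = 2 ^ (p - 1) * r ^ (1 - 2 * (p - 1)) := by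
    rw [Real.rpow_sub hr, Real.rpow_one]; ring
  have hB : r * u ^ (p - 1) ≤ 2 ^ (p - 1) * r ^ (1 - 2 * (p - 1)) := s4.trans_eq s5
  have e1 : u ^ p * f' * r ^ 3 = u ^ (p - 1) * (u * f' * r ^ 3) := by rw [F1]; ring
  have e2 := mul_le_mul_of_nonneg_left F3 hA0
  have e3' := mul_le_mul_of_nonneg_left hB (le_of_lt hr3)
  have e3 := mul_le_mul_of_nonneg_left e3' (by positivity : (0:ℝ) ≤ 2 * p * C * θ)
  have e4 : 0 ≤ r ^ (1 - 2 * (p - 1)) * r ^ 3 := by positivity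
  rw [← mul_nonneg_iff_of_pos_right hr3]
  have expand : ((-2 / r ^ 3) * p * u ^ (p - 1) * F + u ^ p * f'
      + (2 * p * C * θ * 2 ^ (p - 1) + 1) * r ^ (1 - 2 * (p - 1))) * r ^ 3
      = -(2 * p * (u ^ (p - 1) * F)) + u ^ p * f' * r ^ 3
        + (2 * p * C * θ * 2 ^ (p - 1) + 1) * (r ^ (1 - 2 * (p - 1)) * r ^ 3) := by
    field_simp
  rw [expand]
  nlinarith [e1, e2, e3, e4]

theorem stmt_4 (r0 C θ ε : ℝ) (hr0 : 0 < r0) (hC : 0 < C) (hθ : 0 ≤ θ)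
    (hε : 0 < ε) (hε2 : ε < 1 / 2)
    (f : ℝ → ℝ) (hf0 : ∀ r ∈ Ioo 0 r0, 0 ≤ f r)
    (hdiff : ∀ r ∈ Ioo 0 r0, DifferentiableAt ℝ f r)
    (hCr : ∀ r ∈ Ioo 0 r0, 1 + 2 * C * r ^ 2 ≤ 2)
    (hineq : ∀ᵐ r ∂(volume : Measure ℝ), r ∈ Ioo 0 r0 →
      f r ≤ (1 + 2 * C * r ^ 2) * (1 - ε) * (r / 2) * deriv f r + C * r ^ 4 * θ) :
    ∃ Cbar : ℝ, 0 < Cbar ∧ ∀ t s : ℝ, 0 < t → t < s → s < r0 →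
      (((1 + 2 * C * s ^ 2) / s ^ 2) ^ ((1 : ℝ) / (1 - ε))) * f s -
          (((1 + 2 * C * t ^ 2) / t ^ 2) ^ ((1 : ℝ) / (1 - ε))) * f t
        ≥ -Cbar * (s ^ ((2 - 4 * ε) / (1 - ε)) - t ^ ((2 - 4 * ε) / (1 - ε))) := by
  have h1ε : (0:ℝ) < 1 - ε := by linarith
  set p : ℝ := 1 / (1 - ε) with hpdef
  set α : ℝ := (2 - 4 * ε) / (1 - ε) with hαdef
  have hα0 : 0 < α := div_pos (by linarith) h1ε
  have hα1 : α - 1 = 1 - 2 * (p - 1) := by rw [hpdef, hαdef]; field_simp; ring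
  have hp0 : 0 < p := by rw [hpdef]; positivity
  set K : ℝ := 2 * p * C * θ * 2 ^ (p - 1) with hKdef
  have hK0 : 0 ≤ K := by
    rw [hKdef]
    exact mul_nonneg (mul_nonneg (mul_nonneg (by linarith) hC.le) hθ)
      (Real.rpow_nonneg (by norm_num) _)
  set Cb : ℝ := (K + 1) / α with hCbdef
  have hCb0 : 0 < Cb := div_pos (by linarith) hα0
  have hCbα : Cb * α = K + 1 := div_mul_cancel₀ _ hα0.ne'
  refine ⟨Cb, hCb0, fun t s ht hts hs => ?_⟩
  have key : (fun x => ((1 + 2 * C * x ^ 2) / x ^ 2) ^ p * f x + Cb * x ^ α) t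
      ≤ (fun x => ((1 + 2 * C * x ^ 2) / x ^ 2) ^ p * f x + Cb * x ^ α) s := by
    apply mono_aux r0 _
      (fun r => (-2 / r ^ 3) * p * ((1 + 2 * C * r ^ 2) / r ^ 2) ^ (p - 1) * f r
        + ((1 + 2 * C * r ^ 2) / r ^ 2) ^ p * deriv f r + (K + 1) * r ^ (1 - 2 * (p - 1)))
      t s ht hts hs
    · intro r hrm
      have h := deriv_aux C p α Cb f r hrm.1 hC (hdiff r hrm)
      convert h using 2
      rw [← hα1]
      linear_combination (-(r ^ (α - 1))) * hCbα
    · filter_upwards [hineq] with r hr hrm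
      exact pos_aux C θ ε p r (f r) (deriv f r) hC hθ hε hε2 hpdef hrm.1
        (hf0 r hrm) (hCr r hrm) (hr hrm)
  simp only at key
  linarith [key]
end

section
/- Let f : (0, r0) → [0, ∞) be increasing with distributional derivative Df, and suppose f(r) ≤ (r/2) C_r g(r) for a.e. r, where g(r) ≥ 0 and C_r ≥ 1. Then for 0 < t < s < r0, the quotient monotonicity estimate holds: f(s)/s² - f(t)/t² ≥ ∫_t^s [Df/r² - (2/r³) f(r) dr] in the sense that ∫_{(t,s]} r^{-2} dDf(r) - ∫_t^s 2 f(r)/r³ dr ≤ f(s)/s² - f(t)/t². -/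
open MeasureTheory Set Filter
open scoped Interval

theorem stmt_11 (r0 : ℝ) (hr0 : 0 < r0) (f g Cr : ℝ → ℝ)
    (hmono : MonotoneOn f (Ioo 0 r0)) (hf0 : ∀ r ∈ Ioo 0 r0, 0 ≤ f r)
    (hCr : ∀ r ∈ Ioo 0 r0, 1 ≤ Cr r) (hg : ∀ r ∈ Ioo 0 r0, 0 ≤ g r)
    (hfg : ∀ᵐ r ∂(volume : Measure ℝ), r ∈ Ioo 0 r0 → f r ≤ (r / 2) * Cr r * g r)
    (Df : Measure ℝ) [IsFiniteMeasure Df]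
    (hDf : ∀ a b : ℝ, 0 < a → a < b → b < r0 → Df (Ioc a b) ≤ ENNReal.ofReal (f b - f a))
    (t s : ℝ) (ht : 0 < t) (hts : t < s) (hs : s < r0) :
    (∫ r in Ioc t s, 1 / r ^ 2 ∂Df) - ∫ r in Ioc t s, 2 * f r / r ^ 3
      ≤ f s / s ^ 2 - f t / t ^ 2 := by
  have hs0 : 0 < s := ht.trans hts
  set K : ℝ := 2 * s / t ^ 4 with hKdef
  have hK : 0 < K := by positivity
  have hsub : Icc t s ⊆ Ioo 0 r0 := fun r hr => ⟨lt_of_lt_of_le ht hr.1, lt_of_le_of_lt hr.2 hs⟩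
  have hmono' : MonotoneOn f (Icc t s) := hmono.mono hsub
  have hfIcc : IntegrableOn f (Icc t s) volume :=
    hmono'.integrableOn_isCompact isCompact_Icc
  -- integrability of 2 f r / r³ on Icc t s (volume)
  have hInt2 : IntegrableOn (fun r => 2 * f r / r ^ 3) (Icc t s) volume := by
    have hcont : ContinuousOn (fun r : ℝ => 2 / r ^ 3) (Icc t s) := by
      apply ContinuousOn.div continuousOn_const (continuous_pow 3).continuousOn
      intro r hr
      exact pow_ne_zero _ (ne_of_gt (lt_of_lt_of_le ht hr.1))
    have h := hfIcc.mul_continuousOn hcont isCompact_Icc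
    have heq : (fun r : ℝ => 2 * f r / r ^ 3) = fun r => f r * (2 / r ^ 3) := by
      funext r; ring
    rw [heq]; exact h
  -- integrability of 1/r² wrt Df on subintervals
  have hInt1 : ∀ a b : ℝ, t ≤ a → IntegrableOn (fun r : ℝ => 1 / r ^ 2) (Ioc a b) Df := by
    intro a b ha
    have hc : IntegrableOn (fun _ : ℝ => 1 / t ^ 2) (Ioc a b) Df :=
      integrableOn_const (measure_lt_top _ _).ne
    refine Integrable.mono' hc ?_ ?_
    · exact (measurable_one.div ((measurable_id.pow_const 2))).aestronglyMeasurable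
    · refine (ae_restrict_iff' measurableSet_Ioc).2 (ae_of_all _ fun r hr => ?_)
      rw [Real.norm_eq_abs, abs_of_nonneg (by positivity)]
      have htr : t ≤ r := le_trans ha hr.1.le
      exact one_div_le_one_div_of_le (by positivity) (pow_le_pow_left₀ ht.le htr 2)
  -- exact value of ∫_{(a,b]} 2c/r³ dr
  have hint_const : ∀ (c a b : ℝ), t ≤ a → a < b →
      ∫ r in Ioc a b, 2 * c / r ^ 3 = c * (1 / a ^ 2 - 1 / b ^ 2) := by
    intro c a b hta hab
    have ha0 : 0 < a := lt_of_lt_of_le ht hta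
    have hb0 : 0 < b := ha0.trans hab
    have h0 : (0 : ℝ) ∉ [[a, b]] := by
      rw [Set.uIcc_of_le hab.le]
      intro h
      exact absurd h.1 (not_le.2 ha0)
    have hz := integral_zpow (a := a) (b := b) (n := -3)
      (Or.inr ⟨by norm_num, h0⟩)
    have h1 : ∫ r in Ioc a b, 2 * c / r ^ 3 = ∫ r in a..b, 2 * c / r ^ 3 :=
      (intervalIntegral.integral_of_le hab.le).symm
    have h2 : (fun r : ℝ => 2 * c / r ^ 3) = fun r : ℝ => (2 * c) * r ^ (-3 : ℤ) := by
      funext r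
      rw [zpow_neg, div_eq_mul_inv, ← zpow_natCast r 3]
      norm_num
    have ha' : a ≠ 0 := ne_of_gt ha0
    have hb' : b ≠ 0 := ne_of_gt hb0
    rw [h1, h2, intervalIntegral.integral_const_mul, hz]
    norm_num [zpow_neg]
    field_simp
    ring
  -- single small-interval bound
  have single : ∀ a b : ℝ, t ≤ a → a < b → b ≤ s →
      ∫ r in Ioc a b, 1 / r ^ 2 ∂Df ≤ (f b / b ^ 2 - f a / a ^ 2) +
        (∫ r in Ioc a b, 2 * f r / r ^ 3) + K * (b - a) * (f b - f a) := by
    intro a b hta hab hbs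
    have ha0 : 0 < a := lt_of_lt_of_le ht hta
    have hb0 : 0 < b := ha0.trans hab
    have haI : a ∈ Ioo 0 r0 := hsub ⟨hta, le_trans hab.le hbs⟩
    have hbI : b ∈ Ioo 0 r0 := hsub ⟨le_trans hta hab.le, hbs⟩
    have hfab : f a ≤ f b := hmono haI hbI hab.le
    have hfa0 : 0 ≤ f a := hf0 a haI
    -- step 1
    have step1 : ∫ r in Ioc a b, 1 / r ^ 2 ∂Df ≤ (f b - f a) / a ^ 2 := by
      have hm : ∫ r in Ioc a b, 1 / r ^ 2 ∂Df ≤ ∫ _r in Ioc a b, 1 / a ^ 2 ∂Df := by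
        refine setIntegral_mono_on (hInt1 a b hta)
          (integrableOn_const (measure_lt_top _ _).ne) measurableSet_Ioc ?_
        intro r hr
        exact one_div_le_one_div_of_le (by positivity) (pow_le_pow_left₀ ha0.le hr.1.le 2)
      have hc : ∫ _r in Ioc a b, (1 / a ^ 2 : ℝ) ∂Df = (Df (Ioc a b)).toReal * (1 / a ^ 2) := by
        rw [setIntegral_const, smul_eq_mul]; rfl
      have hμ : (Df (Ioc a b)).toReal ≤ f b - f a :=
        ENNReal.toReal_le_of_le_ofReal (sub_nonneg.2 hfab) (hDf a b ha0 hab hbI.2)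
      calc ∫ r in Ioc a b, 1 / r ^ 2 ∂Df ≤ (Df (Ioc a b)).toReal * (1 / a ^ 2) := by
            rw [← hc]; exact hm
        _ ≤ (f b - f a) * (1 / a ^ 2) := by
            apply mul_le_mul_of_nonneg_right hμ (by positivity)
        _ = (f b - f a) / a ^ 2 := by ring
    -- step 2
    have step2 : f a * (1 / a ^ 2 - 1 / b ^ 2) ≤ ∫ r in Ioc a b, 2 * f r / r ^ 3 := by
      rw [← hint_const (f a) a b hta hab]
      refine setIntegral_mono_on ?_ (hInt2.mono_set ?_) measurableSet_Ioc ?_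
      · have hcont : ContinuousOn (fun r : ℝ => 2 * f a / r ^ 3) (Icc a b) := by
          apply ContinuousOn.div continuousOn_const (continuous_pow 3).continuousOn
          intro r hr
          exact pow_ne_zero _ (ne_of_gt (lt_of_lt_of_le ha0 hr.1))
        exact (hcont.integrableOn_compact isCompact_Icc).mono_set Ioc_subset_Icc_self
      · exact fun r hr => ⟨le_trans hta hr.1.le, le_trans hr.2 hbs⟩
      · intro r hr
        have hrI : r ∈ Ioo 0 r0 := hsub ⟨le_trans hta hr.1.le, le_trans hr.2 hbs⟩
        have hfar : f a ≤ f r := hmono haI hrI hr.1.le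
        have hr0' : 0 < r := ha0.trans hr.1
        apply div_le_div_of_nonneg_right (by linarith) (by positivity) |>.trans_eq rfl
    -- step 3
    have step3 : 1 / a ^ 2 - 1 / b ^ 2 ≤ K * (b - a) := by
      have heq : 1 / a ^ 2 - 1 / b ^ 2 = (b - a) * (b + a) / (a ^ 2 * b ^ 2) := by
        field_simp; ring
      rw [heq, hKdef]
      rw [div_le_iff₀ (by positivity)] at *
      have h1 : (b - a) * (b + a) ≤ (b - a) * (2 * s) := by
        apply mul_le_mul_of_nonneg_left _ (by linarith)
        have : a ≤ s := le_trans hab.le hbs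
        linarith
      have h2 : t ^ 4 ≤ a ^ 2 * b ^ 2 := by
        have h2a : t ^ 2 ≤ a ^ 2 := pow_le_pow_left₀ ht.le hta 2
        have h2b : t ^ 2 ≤ b ^ 2 := pow_le_pow_left₀ ht.le (le_trans hta hab.le) 2
        calc t ^ 4 = t ^ 2 * t ^ 2 := by ring
          _ ≤ a ^ 2 * b ^ 2 := mul_le_mul h2a h2b (by positivity) (by positivity)
      calc (b - a) * (b + a) ≤ (b - a) * (2 * s) := h1
        _ = 2 * s * (b - a) := by ring
        _ = 2 * s / t ^ 4 * (b - a) * t ^ 4 := by field_simp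
        _ ≤ 2 * s / t ^ 4 * (b - a) * (a ^ 2 * b ^ 2) := by
            apply mul_le_mul_of_nonneg_left h2 (mul_nonneg (by positivity) (by linarith))
    -- combine
    have hid : (f b - f a) / a ^ 2 = (f b / b ^ 2 - f a / a ^ 2) +
        f a * (1 / a ^ 2 - 1 / b ^ 2) + (f b - f a) * (1 / a ^ 2 - 1 / b ^ 2) := by
      field_simp
      ring
    have herr : (f b - f a) * (1 / a ^ 2 - 1 / b ^ 2) ≤ (f b - f a) * (K * (b - a)) :=
      mul_le_mul_of_nonneg_left step3 (by linarith)
    have := step1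
    rw [hid] at this
    nlinarith [this, step2, herr]
  -- induction: partition bound
  have key : ∀ (δ : ℝ), 0 < δ → ∀ (n : ℕ), ∀ a b : ℝ, t ≤ a → a < b → b ≤ s →
      b - a ≤ (n + 1) * δ →
      ∫ r in Ioc a b, 1 / r ^ 2 ∂Df ≤ (f b / b ^ 2 - f a / a ^ 2) +
        (∫ r in Ioc a b, 2 * f r / r ^ 3) + K * δ * (f b - f a) := by
    intro δ hδ n
    induction n with
    | zero =>
      intro a b hta hab hbs hlen
      have h := single a b hta hab hbs
      have hfab : f a ≤ f b := hmono (hsub ⟨hta, le_trans hab.le hbs⟩)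
        (hsub ⟨le_trans hta hab.le, hbs⟩) hab.le
      have : K * (b - a) * (f b - f a) ≤ K * δ * (f b - f a) := by
        apply mul_le_mul_of_nonneg_right _ (by linarith)
        apply mul_le_mul_of_nonneg_left _ hK.le
        simpa using hlen
      linarith
    | succ n ih =>
      intro a b hta hab hbs hlen
      by_cases hsmall : b - a ≤ δ
      · have h := single a b hta hab hbs
        have hfab : f a ≤ f b := hmono (hsub ⟨hta, le_trans hab.le hbs⟩)
          (hsub ⟨le_trans hta hab.le, hbs⟩) hab.le
        have : K * (b - a) * (f b - f a) ≤ K * δ * (f b - f a) := by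
          apply mul_le_mul_of_nonneg_right _ (by linarith)
          exact mul_le_mul_of_nonneg_left hsmall hK.le
        linarith
      · push_neg at hsmall
        set c : ℝ := b - δ with hc
        have hac : a < c := by simp only [hc]; linarith
        have hcb : c < b := by simp only [hc]; linarith
        have htc : t ≤ c := le_trans hta hac.le
        have hcs : c ≤ s := le_trans hcb.le hbs
        have h1 := ih a c hta hac hcs (by push_cast at hlen ⊢; simp only [hc]; linarith)
        have h2 := single c b htc hcb hbs
        have hIocsub : ∀ x y : ℝ, t ≤ x → y ≤ s → Ioc x y ⊆ Icc t s :=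
          fun x y hx hy r hr => ⟨le_trans hx hr.1.le, le_trans hr.2 hy⟩
        have hsplit1 : ∫ r in Ioc a b, 1 / r ^ 2 ∂Df =
            (∫ r in Ioc a c, 1 / r ^ 2 ∂Df) + ∫ r in Ioc c b, 1 / r ^ 2 ∂Df := by
          rw [← Ioc_union_Ioc_eq_Ioc hac.le hcb.le]
          exact setIntegral_union (Ioc_disjoint_Ioc_of_le le_rfl) measurableSet_Ioc
            (hInt1 a c hta) (hInt1 c b htc)
        have hsplit2 : ∫ r in Ioc a b, 2 * f r / r ^ 3 =
            (∫ r in Ioc a c, 2 * f r / r ^ 3) + ∫ r in Ioc c b, 2 * f r / r ^ 3 := by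
          rw [← Ioc_union_Ioc_eq_Ioc hac.le hcb.le]
          exact setIntegral_union (Ioc_disjoint_Ioc_of_le le_rfl) measurableSet_Ioc
            (hInt2.mono_set (hIocsub a c hta hcs)) (hInt2.mono_set (hIocsub c b htc hbs))
        have hK2 : K * (b - c) * (f b - f c) ≤ K * δ * (f b - f c) := by
          apply mul_le_mul_of_nonneg_right
          · apply mul_le_mul_of_nonneg_left _ hK.le
            simp only [hc]; linarith
          · have : f c ≤ f b := hmono (hsub ⟨htc, hcs⟩) (hsub ⟨le_trans hta hab.le, hbs⟩) hcb.le
            linarith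
        rw [hsplit1, hsplit2]
        linarith
  -- apply with mesh (s-t)/(n+1) and take n → ∞
  have final : ∀ n : ℕ,
      (∫ r in Ioc t s, 1 / r ^ 2 ∂Df) - ∫ r in Ioc t s, 2 * f r / r ^ 3 ≤
        f s / s ^ 2 - f t / t ^ 2 + K * ((s - t) / ((n : ℝ) + 1)) * (f s - f t) := by
    intro n
    have hδ : (0 : ℝ) < (s - t) / ((n : ℝ) + 1) := by
      apply div_pos (by linarith)
      positivity
    have h := key _ hδ n t s le_rfl hts le_rfl (by
      rw [mul_comm, div_mul_cancel₀]
      positivity)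
    linarith
  have hlim0 : Tendsto (fun n : ℕ => (s - t) / ((n : ℝ) + 1)) atTop (nhds 0) := by
    apply Tendsto.div_atTop (tendsto_const_nhds)
    exact tendsto_atTop_add_const_right _ 1 tendsto_natCast_atTop_atTop
  have hlim : Tendsto (fun n : ℕ => f s / s ^ 2 - f t / t ^ 2 +
      K * ((s - t) / ((n : ℝ) + 1)) * (f s - f t)) atTop (nhds (f s / s ^ 2 - f t / t ^ 2)) := by
    have h2 := (hlim0.const_mul K).mul_const (f s - f t)
    simpa using tendsto_const_nhds.add h2
  exact ge_of_tendsto' hlim final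
end
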